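/- Let P be a smooth manifold, E → P a smooth vector bundle, and {·,·} : C^∞(P) × Γ(E) → Γ(E) a bilinear bracket satisfying the first Leibniz identity {f, h·s} = {f,h}·s + h·{f,s} for all f,h ∈ C^∞(P), s ∈ Γ(E) (where {f,h} is a Poisson bracket on P). Then the second Leibniz identity {fh, s} = f{h,s} + h{f,s} holds for all f,h,s if and only if both: (i) {1, s} = 0 for all s ∈ Γ(E), and (ii) {f, s}(p) = 0 whenever f vanishes to second order at p. -/

import Mathlib

/-!
STATEMENT 0 (Proposition 2.2 of "Grothendieck Groups of Poisson Vector Bundles").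

We model `C^∞(P)` as a commutative `ℝ`-algebra `R` with a Poisson bracket `Pb`, and the
space of sections `Γ(E)` of a vector bundle `E → P` as an `R`-module `M`.  A point `p ∈ P`
is modelled by its evaluation character `p : R →ₐ[ℝ] ℝ`; a function `f` vanishes to second
order at `p` iff `f ∈ (ker p)²`, and a section `s` vanishes at `p` iff
`s ∈ (ker p) • Γ(E)`.  The hypothesis `hsep` expresses that a section vanishing at every
point is zero (true for modules of sections of vector bundles over manifolds).
-/

theorem second_leibniz_iff_unit_and_second_order_vanishing
    (R : Type*) [CommRing R] [Algebra ℝ R]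
    (M : Type*) [AddCommGroup M] [Module R M] [Module ℝ M] [IsScalarTower ℝ R M]
    -- the Poisson bracket on `C^∞(P)`
    (Pb : R → R → R)
    (hPb_add_left : ∀ f g h : R, Pb (f + g) h = Pb f h + Pb g h)
    (hPb_smul_left : ∀ (a : ℝ) (f h : R), Pb (a • f) h = a • Pb f h)
    (hPb_skew : ∀ f h : R, Pb f h = - Pb h f)
    (hPb_leibniz : ∀ f g h : R, Pb f (g * h) = g * Pb f h + h * Pb f g)
    (hPb_jacobi : ∀ f g h : R, Pb f (Pb g h) = Pb (Pb f g) h + Pb g (Pb f h))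
    -- the bracket `{·,·} : C^∞(P) × Γ(E) → Γ(E)`, ℝ-bilinear
    (b : R → M → M)
    (hb_add_left : ∀ (f g : R) (s : M), b (f + g) s = b f s + b g s)
    (hb_smul_left : ∀ (a : ℝ) (f : R) (s : M), b (a • f) s = a • b f s)
    (hb_add_right : ∀ (f : R) (s t : M), b f (s + t) = b f s + b f t)
    (hb_smul_right : ∀ (a : ℝ) (f : R) (s : M), b f (a • s) = a • b f s)
    -- `Γ(E)` is a Lie algebra module over `C^∞(P)`
    (hb_lie : ∀ (f h : R) (s : M), b f (b h s) - b h (b f s) = b (Pb f h) s)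
    -- the first Leibniz identity (L1)
    (hL1 : ∀ (f h : R) (s : M), b f (h • s) = (Pb f h) • s + h • b f s)
    -- sections are separated by evaluation at points
    (hsep : ∀ m : M,
      (∀ p : R →ₐ[ℝ] ℝ, m ∈ (RingHom.ker (p : R →+* ℝ)) • (⊤ : Submodule R M)) → m = 0) :
    -- the second Leibniz identity (L2) holds
    (∀ (f h : R) (s : M), b (f * h) s = f • b h s + h • b f s) ↔
      -- iff (i) `{1, s} = 0` and (ii) `{f, s}(p) = 0` whenever `f` vanishes to second
      -- order at `p`
      ((∀ s : M, b 1 s = 0) ∧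
        (∀ (p : R →ₐ[ℝ] ℝ) (f : R) (s : M), f ∈ (RingHom.ker (p : R →+* ℝ)) ^ 2 →
          b f s ∈ (RingHom.ker (p : R →+* ℝ)) • (⊤ : Submodule R M))) := by
  constructor
  · intro hL2
    refine ⟨?_, ?_⟩
    · intro s
      have h11 : b ((1 : R) * 1) s = (1 : R) • b 1 s + (1 : R) • b 1 s := hL2 1 1 s
      have h12 : b (1 : R) s = b 1 s + b 1 s := by simpa using h11
      have := right_eq_add.mp h12
      exact this
    · intro p f s hf
      rw [pow_two] at hf
      refine Submodule.mul_induction_on hf ?_ ?_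
      · intro g hg k hk
        rw [hL2]
        exact add_mem (Submodule.smul_mem_smul hg Submodule.mem_top)
          (Submodule.smul_mem_smul hk Submodule.mem_top)
      · intro x y hx hy
        rw [hb_add_left]
        exact add_mem hx hy
  · rintro ⟨h1, h2⟩ f h s
    have key : ∀ p : R →ₐ[ℝ] ℝ,
        b (f * h) s - (f • b h s + h • b f s) ∈
          (RingHom.ker (p : R →+* ℝ)) • (⊤ : Submodule R M) := by
      intro p
      set a := p f with ha_def
      set a' := p h with ha'_def
      set u := f - algebraMap ℝ R a with hu_def
      set v := h - algebraMap ℝ R a' with hv_def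
      have hu : u ∈ RingHom.ker (p : R →+* ℝ) := by
        simp [RingHom.mem_ker, hu_def, map_sub, AlgHom.commutes, ha_def]
      have hv : v ∈ RingHom.ker (p : R →+* ℝ) := by
        simp [RingHom.mem_ker, hv_def, map_sub, AlgHom.commutes, ha'_def]
      have hzero : ∀ (c : ℝ) (t : M), b (algebraMap ℝ R c) t = 0 := by
        intro c t
        rw [Algebra.algebraMap_eq_smul_one, hb_smul_left, h1, smul_zero]
      have hf' : f = algebraMap ℝ R a + u := by rw [hu_def]; ring
      have hh' : h = algebraMap ℝ R a' + v := by rw [hv_def]; ring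
      have hbf : b f s = b u s := by
        rw [hf', hb_add_left, hzero, zero_add]
      have hbh : b h s = b v s := by
        rw [hh', hb_add_left, hzero, zero_add]
      have expand : b (f * h) s = a • b v s + a' • b u s + b (u * v) s := by
        rw [hf', hh']
        rw [show (algebraMap ℝ R a + u) * (algebraMap ℝ R a' + v)
            = algebraMap ℝ R (a * a') + (algebraMap ℝ R a * v
              + (algebraMap ℝ R a' * u + u * v)) by rw [map_mul]; ring]
        rw [hb_add_left, hb_add_left, hb_add_left, hzero, zero_add]
        rw [show algebraMap ℝ R a * v = a • v from (Algebra.smul_def a v).symm,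
            show algebraMap ℝ R a' * u = a' • u from (Algebra.smul_def a' u).symm,
            hb_smul_left, hb_smul_left]
        abel
      have expf : f • b h s = a • b v s + u • b v s := by
        rw [hbh, hf', add_smul, algebraMap_smul]
      have exph : h • b f s = a' • b u s + v • b u s := by
        rw [hbf, hh', add_smul, algebraMap_smul]
      rw [expand, expf, exph]
      have hm : b (u * v) s - u • b v s - v • b u s ∈
          (RingHom.ker (p : R →+* ℝ)) • (⊤ : Submodule R M) := by
        refine sub_mem (sub_mem ?_ ?_) ?_
        · exact h2 p _ s (by rw [pow_two]; exact Ideal.mul_mem_mul hu hv)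
        · exact Submodule.smul_mem_smul hu Submodule.mem_top
        · exact Submodule.smul_mem_smul hv Submodule.mem_top
      convert hm using 1
      abel
    have := hsep _ key
    exact sub_eq_zero.mp this
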